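/- Consider the consumption dynamics x̄(k+1) = (α−p)·1 + G x̄(k) + β G x̲(k) and x̲(k+1) = (α−p)·1 + G x̲(k) + β G x̄(k) with x̄(0) = s̄ and x̲(0) = s̲. If 0 < δ < 1 and the spectral radius of G is strictly less than 1/(δ(1+β)), then the series Σ_{k=1}^∞ δ^k x̄(k) and Σ_{k=1}^∞ δ^k x̲(k) converge in ℝⁿ. -/

import Mathlib

open Matrix Filter Topology
open scoped ENNReal NNReal

attribute [local instance] Matrix.linftyOpNormedRing Matrix.linftyOpNormedAlgebra

/-- From a spectral radius bound, a geometric bound on norms of powers. -/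
lemma aux_pow_bound {n : ℕ} (a : Matrix (Fin n) (Fin n) ℂ) {r : ℝ} (hr : 0 < r)
    (h : spectralRadius ℂ a < ENNReal.ofReal r) :
    ∃ C : ℝ, 1 ≤ C ∧ ∀ k : ℕ, ‖a ^ k‖ ≤ C * r ^ k := by
  have htend := spectrum.pow_nnnorm_pow_one_div_tendsto_nhds_spectralRadius a
  have hev : ∀ᶠ k : ℕ in atTop, (‖a ^ k‖₊ : ℝ≥0∞) ^ (1 / k : ℝ) < ENNReal.ofReal r :=
    htend.eventually_lt_const h
  obtain ⟨N, hN⟩ := hev.exists_forall_of_atTop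
  set M := max N 1 with hM
  have hbig : ∀ k, M ≤ k → ‖a ^ k‖ ≤ r ^ k := by
    intro k hk
    have hk1 : (1 : ℕ) ≤ k := le_trans (le_max_right N 1) hk
    have hkN : N ≤ k := le_trans (le_max_left N 1) hk
    have h1 := hN k hkN
    have hkpos : (0 : ℝ) < k := by exact_mod_cast hk1
    have h2 := ENNReal.rpow_lt_rpow h1 hkpos
    rw [← ENNReal.rpow_mul, one_div, inv_mul_cancel₀ (ne_of_gt hkpos),
      ENNReal.rpow_one] at h2
    have h3 : (ENNReal.ofReal r) ^ (k : ℝ) = ENNReal.ofReal (r ^ k) := by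
      rw [ENNReal.ofReal_rpow_of_pos hr, Real.rpow_natCast]
    rw [h3, ENNReal.ofReal_eq_coe_nnreal (by positivity), ENNReal.coe_lt_coe] at h2
    have h4 : ‖a ^ k‖ ≤ ((⟨r ^ k, by positivity⟩ : ℝ≥0) : ℝ) := by
      exact_mod_cast h2.le
    simpa using h4
  refine ⟨1 + ∑ j ∈ Finset.range M, ‖a ^ j‖ / r ^ j, le_add_of_nonneg_right (by positivity), ?_⟩
  intro k
  rcases le_or_gt M k with hk | hk
  · have h1 : (1:ℝ) ≤ 1 + ∑ j ∈ Finset.range M, ‖a ^ j‖ / r ^ j :=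
      le_add_of_nonneg_right (by positivity)
    calc ‖a ^ k‖ ≤ r ^ k := hbig k hk
      _ = 1 * r ^ k := (one_mul _).symm
      _ ≤ _ := by gcongr
  · have h1 : ‖a ^ k‖ / r ^ k ≤ ∑ j ∈ Finset.range M, ‖a ^ j‖ / r ^ j :=
      Finset.single_le_sum (f := fun j => ‖a ^ j‖ / r ^ j)
        (fun j _ => by positivity) (Finset.mem_range.mpr hk)
    have h2 : ‖a ^ k‖ / r ^ k ≤ 1 + ∑ j ∈ Finset.range M, ‖a ^ j‖ / r ^ j :=
      h1.trans (le_add_of_nonneg_left zero_le_one)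
    have hrk : (0:ℝ) < r ^ k := by positivity
    calc ‖a ^ k‖ = (‖a ^ k‖ / r ^ k) * r ^ k := by field_simp
      _ ≤ _ := by gcongr

/-- Complexification controls real mulVec. -/
lemma aux_mulVec_bound {n : ℕ} (A : Matrix (Fin n) (Fin n) ℝ) (v : Fin n → ℝ) :
    ‖A *ᵥ v‖ ≤ ‖A.map (algebraMap ℝ ℂ)‖ * ‖v‖ := by
  have hnorm : ∀ w : Fin n → ℝ, ‖(fun j => ((w j : ℝ) : ℂ))‖ = ‖w‖ := by
    intro w
    simp [Pi.norm_def, Pi.nnnorm_def]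
  have h1 : (A.map (algebraMap ℝ ℂ)) *ᵥ (fun j => ((v j : ℝ) : ℂ)) =
      fun i => (((A *ᵥ v) i : ℝ) : ℂ) := by
    funext i
    simp only [mulVec, dotProduct, Matrix.map_apply, Complex.coe_algebraMap]
    push_cast
    rfl
  calc ‖A *ᵥ v‖ = ‖(fun i => (((A *ᵥ v) i : ℝ) : ℂ))‖ := (hnorm _).symm
    _ = ‖(A.map (algebraMap ℝ ℂ)) *ᵥ (fun j => ((v j : ℝ) : ℂ))‖ := by rw [h1]
    _ ≤ ‖A.map (algebraMap ℝ ℂ)‖ * ‖(fun j => ((v j : ℝ) : ℂ))‖ :=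
        Matrix.linfty_opNorm_mulVec _ _
    _ = ‖A.map (algebraMap ℝ ℂ)‖ * ‖v‖ := by rw [hnorm]

lemma aux_summable {n : ℕ} (x : ℕ → Fin n → ℝ) (δ K u : ℝ) (hδ : 0 ≤ δ)
    (hu : 0 ≤ u) (hq : δ * u < 1)
    (hK : ∀ m : ℕ, ‖x m‖ ≤ K * (m + 1) * u ^ m) :
    Summable (fun k : ℕ => δ ^ (k + 1) • x (k + 1)) := by
  have hq0 : (0:ℝ) ≤ δ * u := mul_nonneg hδ hu
  have hs : Summable (fun m : ℕ => K * (m + 1) * (δ * u) ^ m) := by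
    have h1 : Summable (fun m : ℕ => (m : ℝ) ^ 1 * (δ * u) ^ m) :=
      summable_pow_mul_geometric_of_norm_lt_one 1 (by rwa [Real.norm_of_nonneg hq0])
    have h2 : Summable (fun m : ℕ => (δ * u) ^ m) := summable_geometric_of_lt_one hq0 hq
    have h3 := (h1.add h2).mul_left K
    refine h3.congr fun m => ?_
    push_cast
    ring
  apply Summable.of_norm_bounded ((summable_nat_add_iff 1).mpr hs)
  intro k
  rw [norm_smul, Real.norm_of_nonneg (by positivity)]
  calc δ ^ (k + 1) * ‖x (k + 1)‖
      ≤ δ ^ (k + 1) * (K * ((k:ℝ) + 1 + 1) * u ^ (k + 1)) := by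
        have := hK (k + 1)
        push_cast at this ⊢
        exact mul_le_mul_of_nonneg_left (by exact_mod_cast this) (by positivity)
    _ = K * (((k : ℝ) + 1) + 1) * (δ * u) ^ (k + 1) := by
        rw [mul_pow]; ring
    _ = K * ((↑(k + 1) : ℝ) + 1) * (δ * u) ^ (k + 1) := by push_cast; ring

/-- The spectral radius of a real matrix, defined via its complexification. -/
noncomputable def specRad {n : ℕ} (G : Matrix (Fin n) (Fin n) ℝ) : ENNReal :=
  spectralRadius ℂ (G.map (algebraMap ℝ ℂ))

/-- convergence of the discounted consumption series. -/
theorem stmt_3 {n : ℕ} (G : Matrix (Fin n) (Fin n) ℝ) (α p β δ : ℝ)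
    (sa sb : Fin n → ℝ) (xa xb : ℕ → Fin n → ℝ)
    (hG : ∀ i j, 0 ≤ G i j) (hβ0 : 0 ≤ β) (hβ1 : β < 1)
    (hδ0 : 0 < δ) (hδ1 : δ < 1)
    (hspec : specRad G < ENNReal.ofReal (1 / (δ * (1 + β))))
    (h0a : xa 0 = sa) (h0b : xb 0 = sb)
    (ha : ∀ k, xa (k + 1) =
      (fun _ => α - p) + G *ᵥ xa k + β • (G *ᵥ xb k))
    (hb : ∀ k, xb (k + 1) =
      (fun _ => α - p) + G *ᵥ xb k + β • (G *ᵥ xa k)) :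
    Summable (fun k : ℕ => δ ^ (k + 1) • xa (k + 1)) ∧
      Summable (fun k : ℕ => δ ^ (k + 1) • xb (k + 1)) := by
  -- choose r
  have hβpos : (0:ℝ) < 1 + β := by linarith
  have hden : (0:ℝ) < δ * (1 + β) := by positivity
  obtain ⟨r₀, hr₀0, hr₀1, hr₀2⟩ := (ENNReal.lt_iff_exists_real_btwn).mp hspec
  set r := max r₀ (1 / (2 * (δ * (1 + β)))) with hrdef
  have hrpos : 0 < r := lt_max_of_lt_right (by positivity)
  have hrlt : r < 1 / (δ * (1 + β)) := by
    apply max_lt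
    · rw [ENNReal.ofReal_lt_ofReal_iff (by positivity)] at hr₀2
      exact hr₀2
    · rw [div_lt_div_iff₀ (by positivity) hden]
      nlinarith
  have hrspec : spectralRadius ℂ (G.map (algebraMap ℝ ℂ)) < ENNReal.ofReal r :=
    lt_of_lt_of_le hr₀1 (ENNReal.ofReal_le_ofReal (le_max_left _ _))
  obtain ⟨C, hC1, hC⟩ := aux_pow_bound (G.map (algebraMap ℝ ℂ)) hrpos hrspec
  have hC0 : (0:ℝ) ≤ C := zero_le_one.trans hC1
  -- power mulVec bound for the real matrix
  have hpowvec : ∀ (k : ℕ) (v : Fin n → ℝ), ‖(G ^ k) *ᵥ v‖ ≤ C * r ^ k * ‖v‖ := by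
    intro k v
    have h1 : (G ^ k).map (algebraMap ℝ ℂ) = (G.map (algebraMap ℝ ℂ)) ^ k := by
      simp only [← RingHom.mapMatrix_apply, map_pow]
    calc ‖(G ^ k) *ᵥ v‖ ≤ ‖(G ^ k).map (algebraMap ℝ ℂ)‖ * ‖v‖ := aux_mulVec_bound _ _
      _ = ‖(G.map (algebraMap ℝ ℂ)) ^ k‖ * ‖v‖ := by rw [h1]
      _ ≤ (C * r ^ k) * ‖v‖ := mul_le_mul_of_nonneg_right (hC k) (norm_nonneg v)
  set c : Fin n → ℝ := fun _ => 2 * (α - p) with hc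
  -- closed form for the sum sequence
  have hyrec : ∀ k, xa (k + 1) + xb (k + 1) = c + (1 + β) • (G *ᵥ (xa k + xb k)) := by
    intro k
    rw [ha, hb, mulVec_add]
    funext i
    simp only [Pi.add_apply, Pi.smul_apply, smul_eq_mul, hc]
    ring
  have hzrec : ∀ k, xa (k + 1) - xb (k + 1) = (1 - β) • (G *ᵥ (xa k - xb k)) := by
    intro k
    rw [ha, hb, mulVec_sub]
    funext i
    simp only [Pi.add_apply, Pi.sub_apply, Pi.smul_apply, smul_eq_mul]
    ring
  have hyform : ∀ k, xa k + xb k =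
      (1 + β) ^ k • ((G ^ k) *ᵥ (sa + sb)) +
        ∑ j ∈ Finset.range k, (1 + β) ^ j • ((G ^ j) *ᵥ c) := by
    intro k
    induction k with
    | zero => simp [h0a, h0b]
    | succ k ih =>
      rw [hyrec k, ih, Finset.sum_range_succ', mulVec_add, mulVec_smul]
      have hGsum : G *ᵥ (∑ j ∈ Finset.range k, (1 + β) ^ j • ((G ^ j) *ᵥ c)) =
          ∑ j ∈ Finset.range k, (1 + β) ^ j • ((G ^ (j + 1)) *ᵥ c) := by
        rw [← Matrix.mulVecLin_apply, map_sum]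
        refine Finset.sum_congr rfl fun j _ => ?_
        rw [_root_.map_smul, Matrix.mulVecLin_apply, mulVec_mulVec, ← pow_succ']
      rw [hGsum, mulVec_mulVec, ← pow_succ', smul_add, smul_smul,
        ← pow_succ', Finset.smul_sum]
      simp only [smul_smul, ← pow_succ', pow_zero, one_smul, pow_zero, _root_.pow_zero,
        Matrix.one_mulVec]
      abel
  have hzform : ∀ k, xa k - xb k = (1 - β) ^ k • ((G ^ k) *ᵥ (sa - sb)) := by
    intro k
    induction k with
    | zero => simp [h0a, h0b]
    | succ k ih =>
      rw [hzrec k, ih, mulVec_smul, mulVec_mulVec, ← pow_succ', smul_smul, ← pow_succ']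
  -- bounds
  set ρ := (1 + β) * r with hρ
  set u := max 1 ρ with hu
  have hρ0 : 0 ≤ ρ := by positivity
  have hu1 : (1:ℝ) ≤ u := le_max_left _ _
  have hu0 : (0:ℝ) ≤ u := zero_le_one.trans hu1
  have hq : δ * u < 1 := by
    rcases max_cases 1 ρ with ⟨h, _⟩ | ⟨h, _⟩
    · rw [hu, h]; simpa using hδ1
    · rw [hu, h, hρ]
      have : ρ < 1 / δ := by
        rw [hρ]
        calc (1 + β) * r < (1 + β) * (1 / (δ * (1 + β))) := by
              exact mul_lt_mul_of_pos_left hrlt hβpos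
          _ = 1 / δ := by field_simp
      calc δ * ((1 + β) * r) < δ * (1 / δ) := mul_lt_mul_of_pos_left this hδ0
        _ = 1 := by field_simp
  have hρu : ∀ j : ℕ, ρ ^ j ≤ u ^ j := fun j => pow_le_pow_left₀ hρ0 (le_max_right _ _) j
  have hupow : ∀ j k : ℕ, j ≤ k → u ^ j ≤ u ^ k := fun j k h => pow_le_pow_right₀ hu1 h
  -- the two building-block bounds
  have hybound : ∀ m : ℕ, ‖xa m + xb m‖ ≤ (C * (‖sa + sb‖ + ‖c‖)) * (m + 1) * u ^ m := by
    intro m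
    rw [hyform m]
    have h1 : ‖(1 + β) ^ m • ((G ^ m) *ᵥ (sa + sb))‖ ≤ C * ‖sa + sb‖ * u ^ m := by
      rw [norm_smul, Real.norm_of_nonneg (by positivity)]
      calc (1 + β) ^ m * ‖(G ^ m) *ᵥ (sa + sb)‖
          ≤ (1 + β) ^ m * (C * r ^ m * ‖sa + sb‖) :=
            mul_le_mul_of_nonneg_left (hpowvec m _) (by positivity)
        _ = C * ‖sa + sb‖ * ρ ^ m := by rw [hρ, mul_pow]; ring
        _ ≤ C * ‖sa + sb‖ * u ^ m := by
            exact mul_le_mul_of_nonneg_left (hρu m) (by positivity)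
    have h2 : ‖∑ j ∈ Finset.range m, (1 + β) ^ j • ((G ^ j) *ᵥ c)‖ ≤
        C * ‖c‖ * m * u ^ m := by
      calc ‖∑ j ∈ Finset.range m, (1 + β) ^ j • ((G ^ j) *ᵥ c)‖
          ≤ ∑ j ∈ Finset.range m, ‖(1 + β) ^ j • ((G ^ j) *ᵥ c)‖ := norm_sum_le _ _
        _ ≤ ∑ j ∈ Finset.range m, C * ‖c‖ * u ^ m := by
            refine Finset.sum_le_sum fun j hj => ?_
            rw [norm_smul, Real.norm_of_nonneg (by positivity)]
            calc (1 + β) ^ j * ‖(G ^ j) *ᵥ c‖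
                ≤ (1 + β) ^ j * (C * r ^ j * ‖c‖) :=
                  mul_le_mul_of_nonneg_left (hpowvec j _) (by positivity)
              _ = C * ‖c‖ * ρ ^ j := by rw [hρ, mul_pow]; ring
              _ ≤ C * ‖c‖ * u ^ j := mul_le_mul_of_nonneg_left (hρu j) (by positivity)
              _ ≤ C * ‖c‖ * u ^ m :=
                  mul_le_mul_of_nonneg_left
                    (hupow j m (Finset.mem_range.mp hj).le) (by positivity)
        _ = C * ‖c‖ * m * u ^ m := by rw [Finset.sum_const, Finset.card_range]; ring
    calc ‖(1 + β) ^ m • ((G ^ m) *ᵥ (sa + sb)) +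
          ∑ j ∈ Finset.range m, (1 + β) ^ j • ((G ^ j) *ᵥ c)‖
        ≤ C * ‖sa + sb‖ * u ^ m + C * ‖c‖ * m * u ^ m := norm_add_le_of_le h1 h2
      _ ≤ (C * (‖sa + sb‖ + ‖c‖)) * (m + 1) * u ^ m := by
          have hum : (0:ℝ) ≤ u ^ m := by positivity
          have hm1 : (1:ℝ) ≤ (m:ℝ) + 1 := le_add_of_nonneg_left m.cast_nonneg
          nlinarith [norm_nonneg (sa + sb), norm_nonneg c, hC0,
            mul_nonneg (mul_nonneg hC0 (norm_nonneg c)) hum,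
            mul_nonneg (mul_nonneg hC0 (norm_nonneg (sa + sb))) hum]
  have hzbound : ∀ m : ℕ, ‖xa m - xb m‖ ≤ (C * ‖sa - sb‖) * (m + 1) * u ^ m := by
    intro m
    have h1β : (0:ℝ) ≤ 1 - β := by linarith
    rw [hzform m, norm_smul, Real.norm_of_nonneg (pow_nonneg h1β m)]
    calc (1 - β) ^ m * ‖(G ^ m) *ᵥ (sa - sb)‖
        ≤ 1 * (C * r ^ m * ‖sa - sb‖) := by
          apply mul_le_mul (pow_le_one₀ h1β (by linarith)) (hpowvec m _)
            (norm_nonneg _) zero_le_one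
      _ = C * ‖sa - sb‖ * r ^ m := by ring
      _ ≤ C * ‖sa - sb‖ * u ^ m := by
          apply mul_le_mul_of_nonneg_left _ (by positivity)
          apply pow_le_pow_left₀ hrpos.le
          calc r ≤ (1 + β) * r := le_mul_of_one_le_left hrpos.le (by linarith)
            _ ≤ u := le_max_right _ _
      _ ≤ C * ‖sa - sb‖ * ((m + 1) * u ^ m) := by
          apply mul_le_mul_of_nonneg_left _ (by positivity)
          nlinarith [pow_nonneg hu0 m]
      _ = (C * ‖sa - sb‖) * (m + 1) * u ^ m := by ring
  set K : ℝ := C * (‖sa + sb‖ + ‖c‖) + C * ‖sa - sb‖ with hK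
  have hxab : ∀ m : ℕ, ‖xa m‖ ≤ K * (m + 1) * u ^ m ∧ ‖xb m‖ ≤ K * (m + 1) * u ^ m := by
    intro m
    have hy := hybound m
    have hz := hzbound m
    have e1 : xa m = (2⁻¹ : ℝ) • ((xa m + xb m) + (xa m - xb m)) := by
      funext i; simp only [Pi.smul_apply, Pi.add_apply, Pi.sub_apply, smul_eq_mul]; ring
    have e2 : xb m = (2⁻¹ : ℝ) • ((xa m + xb m) - (xa m - xb m)) := by
      funext i; simp only [Pi.smul_apply, Pi.add_apply, Pi.sub_apply, smul_eq_mul]; ring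
    constructor
    · rw [e1, norm_smul]
      calc ‖(2⁻¹ : ℝ)‖ * ‖(xa m + xb m) + (xa m - xb m)‖
          ≤ 1 * (‖xa m + xb m‖ + ‖xa m - xb m‖) := by
            apply mul_le_mul (by norm_num) (norm_add_le _ _) (norm_nonneg _) zero_le_one
        _ ≤ K * (m + 1) * u ^ m := by rw [one_mul, hK]; nlinarith
    · rw [e2, norm_smul]
      calc ‖(2⁻¹ : ℝ)‖ * ‖(xa m + xb m) - (xa m - xb m)‖
          ≤ 1 * (‖xa m + xb m‖ + ‖xa m - xb m‖) := by
            apply mul_le_mul (by norm_num) (norm_sub_le _ _) (norm_nonneg _) zero_le_one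
        _ ≤ K * (m + 1) * u ^ m := by rw [one_mul, hK]; nlinarith
  exact ⟨aux_summable xa δ K u hδ0.le hu0 hq (fun m => (hxab m).1),
    aux_summable xb δ K u hδ0.le hu0 hq (fun m => (hxab m).2)⟩
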